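/- arXiv:2412.17254 — 3 statements merged into one kernel-verified Lean document; each statement's English description precedes it below -/
import Mathlib

section
/- Time-homogeneity is preserved (with degradation) under diagonal softmax reweighting: let $A^X$ be a row-stochastic matrix satisfying $|A^X_{i,(i+m)\bmod N} - A^X_{0,m}| \leq C N^{-\gamma}$ for all $i, m$. Define $A^Y_{i,j} = A^X_{i,j}\exp(-\alpha\mathbb{1}[i=j]) / \big(e^{-\alpha}A^X_{i,i} + \sum_{l\neq i} A^X_{i,l}\big)$. Then there exists a constant $C'$ (depending only on $C$) such that $|A^Y_{i,(i+m)\bmod N} - A^Y_{0,m}| \leq C' e^{2\alpha} N^{1-\gamma}$ for all $i$ and all $m \neq 0$, provided $N$ is large enough that the denominators are bounded below by $e^{-\alpha}/2$. -/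
open BigOperators Finset

theorem stmt7 (C : ℝ) (hC : 0 < C) :
    ∃ C' : ℝ, 0 < C' ∧
      ∀ (N : ℕ) [NeZero N] (α γ : ℝ), 0 ≤ α → 2 < γ →
        ∀ AX : ZMod N → ZMod N → ℝ,
          (∀ i j, 0 ≤ AX i j) → (∀ i, ∑ j : ZMod N, AX i j = 1) →
          (∀ i m : ZMod N, |AX i (i + m) - AX 0 m| ≤ C * (N : ℝ) ^ (-γ)) →
          (∀ i : ZMod N, Real.exp (-α) / 2 ≤
              Real.exp (-α) * AX i i + ∑ l ∈ Finset.univ.filter (fun l => l ≠ i), AX i l) →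
          ∀ i m : ZMod N, m ≠ 0 →
            |AX i (i + m) * Real.exp (-α * (if i = i + m then 1 else 0)) /
                (Real.exp (-α) * AX i i + ∑ l ∈ Finset.univ.filter (fun l => l ≠ i), AX i l) -
              AX 0 m * Real.exp (-α * (if (0 : ZMod N) = m then 1 else 0)) /
                (Real.exp (-α) * AX 0 0 +
                  ∑ l ∈ Finset.univ.filter (fun l => l ≠ (0 : ZMod N)), AX 0 l)|
              ≤ C' * Real.exp (2 * α) * (N : ℝ) ^ ((1 : ℝ) - γ) := by
  refine ⟨8 * C, by positivity, ?_⟩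
  intro N _ α γ hα hγ AX hpos hsum hA hden i m hm
  have hN1 : (1 : ℝ) ≤ (N : ℝ) := by
    exact_mod_cast Nat.one_le_iff_ne_zero.mpr (NeZero.ne N)
  have hne1 : i ≠ i + m := by
    intro h
    exact hm (by simpa using h.symm)
  have hne0 : (0 : ZMod N) ≠ m := fun h => hm h.symm
  rw [if_neg hne1, if_neg hne0]
  simp only [mul_zero, Real.exp_zero, mul_one]
  set X := C * (N : ℝ) ^ (-γ) with hX
  have hXpos : 0 < X := by positivity
  -- entries at most 1
  have hle1 : ∀ i j : ZMod N, AX i j ≤ 1 := by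
    intro i j
    calc AX i j ≤ ∑ l : ZMod N, AX i l :=
          Finset.single_le_sum (fun l _ => hpos i l) (Finset.mem_univ j)
      _ = 1 := hsum i
  -- filtered sum equals 1 - diagonal
  have hsum' : ∀ k : ZMod N,
      ∑ l ∈ Finset.univ.filter (fun l => l ≠ k), AX k l = 1 - AX k k := by
    intro k
    rw [Finset.filter_ne', Finset.sum_erase_eq_sub (Finset.mem_univ k), hsum k]
  set Di := Real.exp (-α) * AX i i + ∑ l ∈ Finset.univ.filter (fun l => l ≠ i), AX i l with hDi
  set D0 := Real.exp (-α) * AX 0 0 + ∑ l ∈ Finset.univ.filter (fun l => l ≠ (0 : ZMod N)), AX 0 l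
    with hD0
  have hexp1 : Real.exp (-α) ≤ 1 := Real.exp_le_one_iff.mpr (by linarith)
  have hexppos : (0 : ℝ) < Real.exp (-α) := Real.exp_pos _
  have hDile : Di ≤ 1 := by
    rw [hDi, hsum' i]
    nlinarith [hpos i i, hle1 i i]
  have hD0le : D0 ≤ 1 := by
    rw [hD0, hsum' 0]
    nlinarith [hpos 0 0, hle1 0 0]
  have hDige : Real.exp (-α) / 2 ≤ Di := hden i
  have hD0ge : Real.exp (-α) / 2 ≤ D0 := hden 0
  have hDipos : 0 < Di := lt_of_lt_of_le (by positivity) hDige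
  have hD0pos : 0 < D0 := lt_of_lt_of_le (by positivity) hD0ge
  set a := AX i (i + m)
  set b := AX 0 m
  have hab : |a - b| ≤ X := hA i m
  have hdiag : |AX i i - AX 0 0| ≤ X := by
    have := hA i 0
    simpa using this
  have hDdiff : |D0 - Di| ≤ X := by
    have heq : D0 - Di = (Real.exp (-α) - 1) * (AX 0 0 - AX i i) := by
      rw [hD0, hDi, hsum' i, hsum' 0]; ring
    rw [heq, abs_mul]
    have h1 : |Real.exp (-α) - 1| ≤ 1 := by
      rw [abs_le]; constructor <;> linarith
    have h2 : |AX 0 0 - AX i i| ≤ X := by rwa [abs_sub_comm]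
    calc |Real.exp (-α) - 1| * |AX 0 0 - AX i i| ≤ 1 * X :=
          mul_le_mul h1 h2 (abs_nonneg _) zero_le_one
      _ = X := one_mul X
  have hnum : |a * D0 - Di * b| ≤ 2 * X := by
    have heq : a * D0 - Di * b = (a - b) * D0 + b * (D0 - Di) := by ring
    rw [heq]
    calc |(a - b) * D0 + b * (D0 - Di)| ≤ |(a - b) * D0| + |b * (D0 - Di)| := abs_add_le _ _
      _ = |a - b| * |D0| + |b| * |D0 - Di| := by rw [abs_mul, abs_mul]
      _ ≤ X * 1 + 1 * X := by
          have hb1 : |b| ≤ 1 := by rw [abs_of_nonneg (hpos 0 m)]; exact hle1 0 m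
          have hD01 : |D0| ≤ 1 := by rw [abs_of_pos hD0pos]; exact hD0le
          exact add_le_add
            (mul_le_mul hab hD01 (abs_nonneg _) hXpos.le)
            (mul_le_mul hb1 hDdiff (abs_nonneg _) zero_le_one)
      _ = 2 * X := by ring
  have key : |a / Di - b / D0| ≤ 8 * C * Real.exp (2 * α) * (N : ℝ) ^ (-γ) := by
    rw [div_sub_div _ _ (ne_of_gt hDipos) (ne_of_gt hD0pos), abs_div,
      abs_of_pos (mul_pos hDipos hD0pos)]
    have hlow : Real.exp (-α) / 2 * (Real.exp (-α) / 2) ≤ Di * D0 := by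
      gcongr <;> positivity
    have : |a * D0 - Di * b| / (Di * D0) ≤
        (2 * X) / (Real.exp (-α) / 2 * (Real.exp (-α) / 2)) :=
      div_le_div₀ (by positivity) hnum (by positivity) hlow
    refine this.trans_eq ?_
    have he : Real.exp (-α) * Real.exp (-α) = (Real.exp (2 * α))⁻¹ := by
      rw [← Real.exp_add, ← Real.exp_neg]; ring_nf
    rw [hX]
    field_simp [he]
    rw [sq, he, mul_comm, ← mul_assoc, mul_inv_cancel₀ (Real.exp_pos _).ne']; norm_num
  refine key.trans ?_
  have hmono : (N : ℝ) ^ (-γ) ≤ (N : ℝ) ^ ((1 : ℝ) - γ) :=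
    Real.rpow_le_rpow_of_exponent_le hN1 (by linarith)
  gcongr
end

section
/- Main consistency reduction theorem (simplified version): Let $A^X$ be a row-stochastic attention matrix with minimal diagonal entry $a = \min_i A^X_{i,i}$, suppose $A^X$ is exactly time-homogeneous ($A^X_{i,(i+m)\bmod N} = A^X_{0,m}$ for all $i,m$), let $v \in \mathbb{R}^N$, $x = A^X v$, and let $x^{dyn} = A^{X,dyn} v$ where $A^{X,dyn}$ zeroes out the diagonal of $A^X$. Assume the separation condition: $|\mathrm{DSTFT}(x^{dyn},\psi,\tau,k)| \leq \kappa|\mathrm{DSTFT}(x,\psi,\tau,k)|$ for all $\tau$ and all $k$ with $k_t \leq k \leq \lfloor N/2\rfloor$, for some $\kappa < 1-a$. Then for any $\eta \in (\kappa/(1-a), 1)$, setting $\alpha = \log\frac{1-\kappa-a\eta}{\eta(1-a)-\kappa}$ and $y = \mathrm{softmax\text{-}rows}(\log\text{-scores of } A^X - \alpha I)\, v$, the inconsistency errors $E(z,\tau) := \sum_{k=k_t}^{\lfloor N/2\rfloor}|\mathrm{DSTFT}(z,\psi,\tau,k)|$ satisfy $E(y,\tau) \leq \eta\, E(x,\tau)$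 for all $\tau$. -/
open Complex BigOperators Finset

noncomputable def dft {N : ℕ} [NeZero N] (x : ZMod N → ℂ) (k : ZMod N) : ℂ :=
  ∑ n : ZMod N, x n * Complex.exp (-2 * Real.pi * Complex.I * ((k.val : ℂ) * (n.val : ℂ)) / (N : ℂ))

noncomputable def dstft {N : ℕ} [NeZero N] (x : ZMod N → ℂ) (ψ : ZMod N → ℝ) (m k : ZMod N) : ℂ :=
  ∑ n : ZMod N, x n * (ψ (n - m) : ℂ) *
    Complex.exp (-2 * Real.pi * Complex.I * ((k.val : ℂ) * (n.val : ℂ)) / (N : ℂ))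

lemma dstft_comb {N : ℕ} [NeZero N] (x w : ZMod N → ℝ) (ψ : ZMod N → ℝ) (m k : ZMod N)
    (p q : ℝ) :
    dstft (fun n => ((p * x n + q * w n : ℝ) : ℂ)) ψ m k =
      (p : ℂ) * dstft (fun n => ((x n : ℝ) : ℂ)) ψ m k +
      (q : ℂ) * dstft (fun n => ((w n : ℝ) : ℂ)) ψ m k := by
  unfold dstft
  rw [Finset.mul_sum, Finset.mul_sum, ← Finset.sum_add_distrib]
  refine Finset.sum_congr rfl fun n _ => ?_
  push_cast
  ring

theorem stmt15 (N : ℕ) [NeZero N] (hN : 2 ≤ N) (S : ZMod N → ZMod N → ℝ)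
    (AX AY : ZMod N → ZMod N → ℝ) (v : ZMod N → ℝ) (ψ : ZMod N → ℝ)
    (a κ η α : ℝ) (kt : ℕ) (hkt1 : 1 ≤ kt) (hkt2 : kt ≤ N / 2)
    (hAX : ∀ i j, AX i j = Real.exp (S i j) / ∑ l : ZMod N, Real.exp (S i l))
    (hAY : ∀ i j, AY i j = Real.exp (S i j - if i = j then α else 0) /
        ∑ l : ZMod N, Real.exp (S i l - if i = l then α else 0))
    (hhom : ∀ i m : ZMod N, AX i (i + m) = AX 0 m)
    (ha : IsLeast (Set.range fun i : ZMod N => AX i i) a)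
    (hκ : 0 ≤ κ) (hκa : κ < 1 - a)
    (hsep : ∀ τ : ZMod N, ∀ k : ℕ, kt ≤ k → k ≤ N / 2 →
      ‖dstft
          (fun n => ((∑ j ∈ Finset.univ.filter (fun j => j ≠ n), AX n j * v j : ℝ) : ℂ))
          ψ τ (k : ZMod N)‖ ≤
        κ * ‖dstft (fun n => ((∑ j : ZMod N, AX n j * v j : ℝ) : ℂ))
          ψ τ (k : ZMod N)‖)
    (hη1 : κ / (1 - a) < η) (hη2 : η < 1)
    (hα : α = Real.log ((1 - κ - a * η) / (η * (1 - a) - κ))) :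
    ∀ τ : ZMod N,
      ∑ k ∈ Finset.Icc kt (N / 2),
          ‖dstft (fun n => ((∑ j : ZMod N, AY n j * v j : ℝ) : ℂ))
            ψ τ (k : ZMod N)‖ ≤
        η * ∑ k ∈ Finset.Icc kt (N / 2),
          ‖dstft (fun n => ((∑ j : ZMod N, AX n j * v j : ℝ) : ℂ))
            ψ τ (k : ZMod N)‖ := by
  have h1a : 0 < 1 - a := lt_of_le_of_lt hκ hκa
  -- positivity of denominators Z i
  have hZpos : ∀ i : ZMod N, 0 < ∑ l : ZMod N, Real.exp (S i l) :=
    fun i => Finset.sum_pos (fun l _ => Real.exp_pos _) ⟨0, Finset.mem_univ 0⟩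
  -- all diagonal entries equal a
  have haa : ∀ i : ZMod N, AX i i = a := by
    obtain ⟨i₀, hi₀⟩ := ha.1
    intro i
    have h1 := hhom i 0
    have h2 := hhom i₀ 0
    rw [add_zero] at h1 h2
    have hi₀' : AX i₀ i₀ = a := hi₀
    rw [h1, ← h2, hi₀']
  have hapos : 0 < a := by
    rw [← haa 0, hAX]
    exact div_pos (Real.exp_pos _) (hZpos 0)
  have ha1 : a < 1 := by
    haveI : Fact (1 < N) := ⟨hN⟩
    rw [← haa 0, hAX]
    rw [div_lt_one (hZpos 0)]
    exact Finset.single_lt_sum (f := fun l => Real.exp (S 0 l)) (one_ne_zero (α := ZMod N))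
      (Finset.mem_univ 0) (Finset.mem_univ 1) (Real.exp_pos _) (fun k _ _ => (Real.exp_pos _).le)
  have hη0 : 0 ≤ η := le_of_lt (lt_of_le_of_lt (div_nonneg hκ h1a.le) hη1)
  have hnum : 0 < 1 - κ - a * η := by nlinarith
  have hden : 0 < η * (1 - a) - κ := by
    have := (div_lt_iff₀ h1a).mp hη1
    linarith [this]
  set c : ℝ := Real.exp (-α) with hc
  have hcpos : 0 < c := Real.exp_pos _
  have hceq : c = (η * (1 - a) - κ) / (1 - κ - a * η) := by
    rw [hc, hα, ← Real.log_inv, Real.exp_log]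
    · rw [inv_div]
    · positivity
  have hkey : c * (1 - κ - a * η) = η * (1 - a) - κ := by
    rw [hceq, div_mul_cancel₀ _ hnum.ne']
  have hc1 : c ≤ 1 := by
    rw [hceq, div_le_one hnum]
    nlinarith
  set d : ℝ := 1 - a + a * c with hd
  have hdpos : 0 < d := by nlinarith
  have hηd : c + (1 - c) * κ = η * d := by
    rw [hd]; linear_combination hkey
  -- AY in terms of AX
  have hAY' : ∀ n j : ZMod N, AY n j = AX n j * (if n = j then c else 1) / d := by
    intro n j
    have hexp : Real.exp (S n n) = a * ∑ l : ZMod N, Real.exp (S n l) := by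
      have := haa n
      rw [hAX] at this
      field_simp at this
      linarith [this]
    have hDen : (∑ l : ZMod N, Real.exp (S n l - if n = l then α else 0))
        = (∑ l : ZMod N, Real.exp (S n l)) * d := by
      have hterm : ∀ l : ZMod N, Real.exp (S n l - if n = l then α else 0)
          = Real.exp (S n l) + (if n = l then (c - 1) * Real.exp (S n n) else 0) := by
        intro l
        by_cases h : n = l
        · subst h; simp [Real.exp_sub, Real.exp_neg, hc]; ring
        · simp [h]
      rw [Finset.sum_congr rfl fun l _ => hterm l, Finset.sum_add_distrib,
        Finset.sum_ite_eq, if_pos (Finset.mem_univ n), hexp, hd]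
      ring
    rw [hAY, hDen, hAX]
    have hnumr : Real.exp (S n j - if n = j then α else 0)
        = Real.exp (S n j) * (if n = j then c else 1) := by
      by_cases h : n = j
      · simp [h, Real.exp_sub, Real.exp_neg, hc, div_eq_mul_inv]
      · simp [h]
    rw [hnumr]
    field_simp
  -- combination identity for rows of y
  have hy : ∀ n : ZMod N, (∑ j : ZMod N, AY n j * v j)
      = (c / d) * (∑ j : ZMod N, AX n j * v j)
        + ((1 - c) / d) * (∑ j ∈ Finset.univ.filter (fun j => j ≠ n), AX n j * v j) := by
    intro n
    have hsplitX : (∑ j : ZMod N, AX n j * v j)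
        = AX n n * v n + ∑ j ∈ Finset.univ.filter (fun j => j ≠ n), AX n j * v j := by
      rw [Finset.filter_ne', Finset.add_sum_erase _ (fun j => AX n j * v j) (Finset.mem_univ n)]
    have hsplitY : (∑ j : ZMod N, AY n j * v j)
        = AY n n * v n + ∑ j ∈ Finset.univ.filter (fun j => j ≠ n), AY n j * v j := by
      rw [Finset.filter_ne', Finset.add_sum_erase _ (fun j => AY n j * v j) (Finset.mem_univ n)]
    have hrest : ∀ j ∈ Finset.univ.filter (fun j => j ≠ n), AY n j * v j
        = (AX n j * v j) / d := by
      intro j hj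
      have hj' : j ≠ n := (Finset.mem_filter.mp hj).2
      rw [hAY' n j, if_neg (fun h => hj' h.symm)]
      ring
    rw [hsplitY, Finset.sum_congr rfl hrest, hAY' n n, if_pos rfl, hsplitX,
      ← Finset.sum_div]
    field_simp
    ring
  -- main estimate
  intro τ
  rw [Finset.mul_sum]
  refine Finset.sum_le_sum fun k hk => ?_
  obtain ⟨hk1, hk2⟩ := Finset.mem_Icc.mp hk
  have hfun : (fun n : ZMod N => ((∑ j : ZMod N, AY n j * v j : ℝ) : ℂ))
      = fun n => (((c / d) * (∑ j : ZMod N, AX n j * v j)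
        + ((1 - c) / d) * (∑ j ∈ Finset.univ.filter (fun j => j ≠ n), AX n j * v j) : ℝ) : ℂ) := by
    funext n
    rw [hy n]
  rw [hfun,
    dstft_comb (fun n => ∑ j : ZMod N, AX n j * v j)
      (fun n => ∑ j ∈ Finset.univ.filter (fun j => j ≠ n), AX n j * v j) ψ τ _ (c / d) ((1 - c) / d)]
  set DX := dstft (fun n => ((∑ j : ZMod N, AX n j * v j : ℝ) : ℂ)) ψ τ (k : ZMod N)
  set DXd := dstft (fun n => ((∑ j ∈ Finset.univ.filter (fun j => j ≠ n), AX n j * v j : ℝ) : ℂ))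
    ψ τ (k : ZMod N)
  have hsep' : ‖DXd‖ ≤ κ * ‖DX‖ := hsep τ k hk1 hk2
  have hcd : (0:ℝ) ≤ c / d := div_nonneg hcpos.le hdpos.le
  have hcd' : (0:ℝ) ≤ (1 - c) / d := div_nonneg (by linarith) hdpos.le
  calc ‖((c / d : ℝ) : ℂ) * DX + (((1 - c) / d : ℝ) : ℂ) * DXd‖
      ≤ ‖((c / d : ℝ) : ℂ) * DX‖ + ‖(((1 - c) / d : ℝ) : ℂ) * DXd‖ :=
        norm_add_le _ _
    _ = (c / d) * ‖DX‖ + ((1 - c) / d) * ‖DXd‖ := by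
        rw [norm_mul, norm_mul, Complex.norm_real, Complex.norm_real, Real.norm_eq_abs,
          Real.norm_eq_abs, _root_.abs_of_nonneg hcd, _root_.abs_of_nonneg hcd']
    _ ≤ (c / d) * ‖DX‖ + ((1 - c) / d) * (κ * ‖DX‖) := by
        have := mul_le_mul_of_nonneg_left hsep' hcd'
        linarith
    _ = η * ‖DX‖ := by
        have : c / d + ((1 - c) / d) * κ = η := by
          field_simp
          linarith [hηd]
        linear_combination ‖DX‖ * this
end

section
/- $\iota(\alpha,a) + \kappa\,\lambda(\alpha,a)$ is strictly decreasing in $\alpha$ on $[0,\infty)$ whenever $0 \leq \kappa < 1-a$ and $a \in [0,1)$, with value $1$ at $\alpha = 0$ and limit $\kappa/(1-a)$ as $\alpha \to \infty$; hence for every $\eta \in (\kappa/(1-a), 1]$ there is a unique $\alpha \geq 0$ with $\iota(\alpha,a)+\kappa\lambda(\alpha,a) = \eta$. -/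
open Filter Real

theorem stmt18 (a κ : ℝ) (ha0 : 0 ≤ a) (ha1 : a < 1) (hκ0 : 0 ≤ κ) (hκ : κ < 1 - a) :
    StrictAntiOn
        (fun α : ℝ => Real.exp (-α) / (1 - (1 - Real.exp (-α)) * a) +
          κ * ((1 - Real.exp (-α)) / (1 - (1 - Real.exp (-α)) * a)))
        (Set.Ici 0) ∧
      (Real.exp (-(0 : ℝ)) / (1 - (1 - Real.exp (-(0 : ℝ))) * a) +
          κ * ((1 - Real.exp (-(0 : ℝ))) / (1 - (1 - Real.exp (-(0 : ℝ))) * a)) = 1) ∧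
      Filter.Tendsto
        (fun α : ℝ => Real.exp (-α) / (1 - (1 - Real.exp (-α)) * a) +
          κ * ((1 - Real.exp (-α)) / (1 - (1 - Real.exp (-α)) * a)))
        Filter.atTop (nhds (κ / (1 - a))) ∧
      ∀ η : ℝ, κ / (1 - a) < η → η ≤ 1 →
        ∃! α : ℝ, 0 ≤ α ∧
          Real.exp (-α) / (1 - (1 - Real.exp (-α)) * a) +
            κ * ((1 - Real.exp (-α)) / (1 - (1 - Real.exp (-α)) * a)) = η := by
  -- denominator positivity
  have hD : ∀ α : ℝ, 0 ≤ α → 0 < 1 - (1 - Real.exp (-α)) * a := by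
    intro α hα
    have h1 : Real.exp (-α) ≤ 1 := Real.exp_le_one_iff.mpr (by linarith)
    have h2 : 0 < Real.exp (-α) := Real.exp_pos _
    nlinarith
  have hanti : StrictAntiOn
      (fun α : ℝ => Real.exp (-α) / (1 - (1 - Real.exp (-α)) * a) +
        κ * ((1 - Real.exp (-α)) / (1 - (1 - Real.exp (-α)) * a)))
      (Set.Ici 0) := by
    intro α hα β hβ hab
    simp only
    set s := Real.exp (-α) with hs
    set t := Real.exp (-β) with ht
    have hts : t < s := Real.exp_lt_exp.mpr (by simp only [Set.mem_Ici] at hα hβ; linarith)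
    have hDa : 0 < 1 - (1 - s) * a := hD α hα
    have hDb : 0 < 1 - (1 - t) * a := hD β hβ
    have e1 : t / (1 - (1 - t) * a) + κ * ((1 - t) / (1 - (1 - t) * a))
        = (t + κ * (1 - t)) / (1 - (1 - t) * a) := by ring
    have e2 : s / (1 - (1 - s) * a) + κ * ((1 - s) / (1 - (1 - s) * a))
        = (s + κ * (1 - s)) / (1 - (1 - s) * a) := by ring
    rw [e1, e2, div_lt_div_iff₀ hDb hDa]
    nlinarith [mul_pos (sub_pos.mpr hts) (show (0:ℝ) < 1 - a - κ by linarith)]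
  refine ⟨hanti, by norm_num, ?_, ?_⟩
  · -- limit at infinity
    have h0 : Filter.Tendsto (fun α : ℝ => Real.exp (-α)) Filter.atTop (nhds 0) :=
      Real.tendsto_exp_neg_atTop_nhds_zero
    have hc1 : Filter.Tendsto (fun _ : ℝ => κ) Filter.atTop (nhds κ) := tendsto_const_nhds
    have hc2 : Filter.Tendsto (fun _ : ℝ => (1:ℝ)) Filter.atTop (nhds 1) := tendsto_const_nhds
    have hca : Filter.Tendsto (fun _ : ℝ => a) Filter.atTop (nhds a) := tendsto_const_nhds
    have hnum : Filter.Tendsto (fun α : ℝ => 1 - Real.exp (-α)) Filter.atTop (nhds (1 - 0)) :=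
      hc2.sub h0
    have hd : Filter.Tendsto (fun α : ℝ => 1 - (1 - Real.exp (-α)) * a) Filter.atTop
        (nhds (1 - (1 - 0) * a)) := hc2.sub (hnum.mul hca)
    have hne : (1 : ℝ) - (1 - 0) * a ≠ 0 := by norm_num; linarith
    have := (h0.div hd hne).add (hc1.mul (hnum.div hd hne))
    have heq : (0 : ℝ) / (1 - (1 - 0) * a) + κ * ((1 - 0) / (1 - (1 - 0) * a)) = κ / (1 - a) := by
      rw [zero_div, zero_add, sub_zero, one_mul, mul_one_div]
    rw [heq] at this
    exact this
  · -- existence and uniqueness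
    intro η hη1 hη2
    have ha1' : (0:ℝ) < 1 - a := by linarith
    have hn : 0 < η * (1 - a) - κ := by
      rw [div_lt_iff₀ ha1'] at hη1; linarith
    have hd : 0 < 1 - κ - η * a := by nlinarith
    set t : ℝ := (η * (1 - a) - κ) / (1 - κ - η * a) with htdef
    have ht0 : 0 < t := div_pos hn hd
    have ht1 : t ≤ 1 := by
      rw [div_le_one hd]; nlinarith
    refine ⟨-Real.log t, ⟨?_, ?_⟩, ?_⟩
    · have : Real.log t ≤ 0 := Real.log_nonpos (le_of_lt ht0) ht1
      linarith
    · have hexp : Real.exp (-(-Real.log t)) = t := by rw [neg_neg, Real.exp_log ht0]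
      rw [hexp]
      have hDt : 0 < 1 - (1 - t) * a := by nlinarith
      have e1 : t / (1 - (1 - t) * a) + κ * ((1 - t) / (1 - (1 - t) * a))
          = (t + κ * (1 - t)) / (1 - (1 - t) * a) := by ring
      rw [e1, div_eq_iff hDt.ne', htdef]
      field_simp
      ring
    · intro β ⟨hβ0, hβeq⟩
      have hα0 : (0:ℝ) ≤ -Real.log t := by
        have : Real.log t ≤ 0 := Real.log_nonpos (le_of_lt ht0) ht1
        linarith
      have hαeq : Real.exp (-(-Real.log t)) / (1 - (1 - Real.exp (-(-Real.log t))) * a) +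
          κ * ((1 - Real.exp (-(-Real.log t))) / (1 - (1 - Real.exp (-(-Real.log t))) * a)) = η := by
        have hexp : Real.exp (-(-Real.log t)) = t := by rw [neg_neg, Real.exp_log ht0]
        rw [hexp]
        have hDt : 0 < 1 - (1 - t) * a := by nlinarith
        have e1 : t / (1 - (1 - t) * a) + κ * ((1 - t) / (1 - (1 - t) * a))
            = (t + κ * (1 - t)) / (1 - (1 - t) * a) := by ring
        rw [e1, div_eq_iff hDt.ne', htdef]
        field_simp
        ring
      exact hanti.injOn hβ0 hα0 (by rw [hβeq, hαeq])
end
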